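/- arXiv:2411.12606 — 3 statements merged into one kernel-verified Lean document; each statement's English description precedes it below -/
import Mathlib

section
/- If G is a cycle permutation graph that contains a cycle of length 4, then G is hamiltonian. -/
open SimpleGraph
set_option linter.unusedSectionVars false

namespace CPGaux

open SimpleGraph Walk

variable {V : Type*} [Fintype V] [DecidableEq V]

/-- In a set of ncard 2, any element has a unique mate. -/
lemma pair_or {N : Set V} (h2 : N.ncard = 2) {x : V} (hx : x ∈ N) :
    ∃ y, y ∈ N ∧ y ≠ x ∧ ∀ z ∈ N, z = x ∨ z = y := by
  rw [Set.ncard_eq_two] at h2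
  obtain ⟨u, w, huw, rfl⟩ := h2
  rcases hx with rfl | rfl
  · refine ⟨w, Or.inr rfl, huw.symm, ?_⟩
    rintro z (rfl | rfl)
    · exact Or.inl rfl
    · exact Or.inr rfl
  · refine ⟨u, Or.inl rfl, huw, ?_⟩
    rintro z (rfl | rfl)
    · exact Or.inr rfl
    · exact Or.inl rfl

/-- There is a path whose start is "saturated": all neighbours of the start lie on it. -/
lemma exists_satPath (K : SimpleGraph V) (a : V) :
    ∃ (v : V) (p : K.Walk v a), p.IsPath ∧ ∀ w, K.Adj v w → w ∈ p.support := by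
  classical
  set P : ℕ → Prop := fun n => ∃ (v : V) (p : K.Walk v a), p.IsPath ∧ p.length = n with hP
  have h0 : P 0 := ⟨a, Walk.nil, by simp, rfl⟩
  have hbd : ∀ n, P n → n < Fintype.card V := by
    rintro n ⟨v, p, hp, rfl⟩
    exact hp.length_lt
  set n := Nat.findGreatest P (Fintype.card V) with hn
  have hPn : P n := Nat.findGreatest_spec (le_of_lt (hbd 0 h0)) h0
  have hmax : ∀ m, P m → m ≤ n := fun m hm => Nat.le_findGreatest (le_of_lt (hbd m hm)) hm
  obtain ⟨v, p, hp, hlen⟩ := hPn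
  refine ⟨v, p, hp, ?_⟩
  by_contra hcon
  push_neg at hcon
  obtain ⟨w, hw, hwn⟩ := hcon
  have hp' : (Walk.cons hw.symm p).IsPath := by
    rw [Walk.cons_isPath_iff]
    exact ⟨hp, hwn⟩
  have : P (n + 1) := ⟨w, Walk.cons hw.symm p, hp', by simp [hlen]⟩
  exact absurd (hmax _ this) (by omega)

lemma mem_support_of_closed {K : SimpleGraph V} {v : V} {c : K.Walk v v} (hc : ¬ c.Nil)
    {y : V} : y ∈ c.support ↔ y ∈ c.support.tail := by
  cases c with
  | nil => simp at hc
  | cons h q =>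
    simp only [Walk.support_cons, List.tail_cons, List.mem_cons]
    constructor
    · rintro (rfl | hy)
      · exact q.end_mem_support
      · exact hy
    · exact Or.inr

lemma mem_support_rotate {K : SimpleGraph V} {v x : V} {c : K.Walk v v} (hc : ¬ c.Nil)
    (hx : x ∈ c.support) {y : V} : y ∈ (c.rotate x hx).support ↔ y ∈ c.support := by
  have hlen : (c.rotate x hx).length = c.length := by
    rw [← Walk.length_darts, ← Walk.length_darts, (c.rotate_darts x hx).perm.length_eq]
  have hnil : ¬ (c.rotate x hx).Nil := by
    rw [Walk.not_nil_iff_lt_length] at hc ⊢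
    omega
  rw [mem_support_of_closed hnil, mem_support_of_closed hc,
    (c.support_rotate x hx).mem_iff]

/-- In a cycle, the start has two distinct neighbours on the cycle, with both edges in it. -/
lemma cycle_start_nbrs {K : SimpleGraph V} {x : V} {c : K.Walk x x} (hc : c.IsCycle) :
    ∃ s t, s ≠ t ∧ K.Adj x s ∧ K.Adj x t ∧ s ∈ c.support ∧ t ∈ c.support ∧
      s(x, s) ∈ c.edges ∧ s(x, t) ∈ c.edges := by
  have hnil : ¬ c.Nil := hc.isCircuit.not_nil
  obtain ⟨s, h, q, hq⟩ := Walk.not_nil_iff.mp hnil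
  have hnil' : ¬ c.reverse.Nil := by
    rw [Walk.not_nil_iff_lt_length, Walk.length_reverse]
    rwa [Walk.not_nil_iff_lt_length] at hnil
  obtain ⟨t, h', q', hq'⟩ := Walk.not_nil_iff.mp hnil'
  have hs_mem : s ∈ c.support := by rw [hq]; simp
  have ht_mem : t ∈ c.support := by
    have : t ∈ c.reverse.support := by rw [hq']; simp
    rwa [Walk.support_reverse, List.mem_reverse] at this
  have hes : s(x, s) ∈ c.edges := by rw [hq]; simp
  have het : s(x, t) ∈ c.edges := by
    have : s(x, t) ∈ c.reverse.edges := by rw [hq']; simp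
    rwa [Walk.edges_reverse, List.mem_reverse] at this
  refine ⟨s, t, ?_, h, h', hs_mem, ht_mem, hes, het⟩
  rintro rfl
  have hlen3 := hc.three_le_length
  have hqe : q.edges ≠ [] := by
    intro h0
    have hq0 : q.length = 0 := by
      have := congrArg List.length h0
      simpa using this
    have : c.length = 1 := by rw [hq]; simp [hq0]
    omega
  have hce : c.edges = s(x, s) :: q.edges := by rw [hq]; simp
  have hce' : c.edges.reverse = s(x, s) :: q'.edges := by
    rw [← Walk.edges_reverse, hq']; simp
  have hrev : c.edges = q'.edges.reverse ++ [s(x, s)] := by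
    have h2 := congrArg List.reverse hce'
    simpa using h2
  have hnodup := hc.isCircuit.isTrail.edges_nodup
  rw [hce, List.nodup_cons] at hnodup
  have hq'e : q'.edges.reverse ≠ [] := by
    intro h0
    rw [hce, h0, List.nil_append, List.cons.injEq] at hrev
    exact hqe hrev.2
  obtain ⟨e0, l, hal⟩ := List.exists_cons_of_ne_nil hq'e
  rw [hce, hal, List.cons_append, List.cons.injEq] at hrev
  exact hnodup.1 (hrev.2 ▸ (List.mem_append.mpr (Or.inr (List.mem_singleton_self _))))

/-- In a graph all whose degrees are 0 or 2, the support of a cycle is closed under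
adjacency. -/
lemma cycle_closure {K : SimpleGraph V}
    (hdeg : ∀ ⦃x : V⦄, (K.neighborSet x).Nonempty → (K.neighborSet x).ncard = 2)
    {v : V} {c : K.Walk v v} (hc : c.IsCycle) {x : V} (hx : x ∈ c.support)
    {w : V} (hw : K.Adj x w) : w ∈ c.support := by
  have hc' := hc.rotate hx
  obtain ⟨s, t, hst, hxs, hxt, hsm, htm, -, -⟩ := cycle_start_nbrs hc'
  have h2 : (K.neighborSet x).ncard = 2 := hdeg ⟨w, hw⟩
  obtain ⟨y, hy, hyne, hall⟩ := pair_or h2 (show s ∈ K.neighborSet x from hxs)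
  have hty : t = y := (hall t hxt).resolve_left (fun h => hst h.symm)
  rw [mem_support_rotate hc.isCircuit.not_nil hx] at hsm htm
  rcases hall w hw with rfl | rfl
  · exact hsm
  · rw [hty] at htm
    exact htm

lemma walk_closure {K : SimpleGraph V}
    (hdeg : ∀ ⦃x : V⦄, (K.neighborSet x).Nonempty → (K.neighborSet x).ncard = 2)
    {v : V} {c : K.Walk v v} (hc : c.IsCycle) :
    ∀ {u y : V} (_ : K.Walk u y), u ∈ c.support → y ∈ c.support := by
  intro u y p
  induction p with
  | nil => exact id
  | cons h q ih => exact fun hu => ih (cycle_closure hdeg hc hu h)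

/-- A graph with an edge, all whose degrees are 0 or 2, has a cycle. -/
lemma exists_cycle {K : SimpleGraph V}
    (hdeg : ∀ ⦃x : V⦄, (K.neighborSet x).Nonempty → (K.neighborSet x).ncard = 2)
    {a b : V} (hab : K.Adj a b) : ∃ (v : V) (c : K.Walk v v), c.IsCycle := by
  obtain ⟨v, p, hp, hsat⟩ := exists_satPath K a
  cases p with
  | nil =>
    exfalso
    have hba := hsat b hab
    simp only [Walk.support_nil, List.mem_singleton] at hba
    exact hab.ne' hba
  | @cons _ m _ h q =>
    have h2 : (K.neighborSet v).ncard = 2 := hdeg ⟨m, h⟩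
    obtain ⟨z, hz, hzu, -⟩ := pair_or h2 (show m ∈ K.neighborSet v from h)
    have hvz : K.Adj v z := hz
    have hzsup : z ∈ (Walk.cons h q).support := hsat z hvz
    have hzv : z ≠ v := hvz.ne'
    have hvq : v ∉ q.support := ((Walk.cons_isPath_iff h q).mp hp).2
    set t := (Walk.cons h q).takeUntil z hzsup with ht
    refine ⟨v, Walk.cons hvz t.reverse, ?_⟩
    rw [Walk.cons_isCycle_iff]
    constructor
    · exact (hp.takeUntil hzsup).reverse
    · rw [Walk.edges_reverse, List.mem_reverse]
      intro hmem
      have hmem' : s(v, z) ∈ (Walk.cons h q).edges :=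
        Walk.edges_takeUntil_subset _ hzsup hmem
      rw [Walk.edges_cons, List.mem_cons] at hmem'
      rcases hmem' with heq | hmem'
      · rw [Sym2.eq_iff] at heq
        rcases heq with ⟨-, h2'⟩ | ⟨h1', -⟩
        · exact hzu h2'
        · exact h.ne h1'
      · exact hvq (q.fst_mem_support_of_mem_edges hmem')

lemma cycle_support_eq {K : SimpleGraph V} {S : Set V}
    (hdeg : ∀ ⦃x : V⦄, (K.neighborSet x).Nonempty → (K.neighborSet x).ncard = 2)
    (hsub : ∀ ⦃x y : V⦄, K.Adj x y → x ∈ S)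
    (hconn : ∀ x y, x ∈ S → y ∈ S → K.Reachable x y)
    {v : V} {c : K.Walk v v} (hc : c.IsCycle) :
    ∀ y, y ∈ c.support ↔ y ∈ S := by
  have hgen : ∀ {x : V} {cc : K.Walk x x}, cc.IsCycle → x ∈ S := by
    intro x cc hcc
    obtain ⟨u, hu, q, -⟩ := Walk.not_nil_iff.mp hcc.isCircuit.not_nil
    exact hsub hu
  intro y
  constructor
  · intro hy
    exact hgen (hc.rotate hy)
  · intro hy
    have hv : v ∈ S := hgen hc
    obtain ⟨w⟩ := hconn v y hv hy
    exact walk_closure hdeg hc w c.start_mem_support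

lemma edge_mem_cycle {K : SimpleGraph V}
    (hdeg : ∀ ⦃x : V⦄, (K.neighborSet x).Nonempty → (K.neighborSet x).ncard = 2)
    {v : V} {c : K.Walk v v} (hc : c.IsCycle)
    {a b : V} (ha : a ∈ c.support) (hab : K.Adj a b) : s(a, b) ∈ c.edges := by
  have hc' := hc.rotate ha
  obtain ⟨s, t, hst, has, hat, -, -, hes, het⟩ := cycle_start_nbrs hc'
  have h2 : (K.neighborSet a).ncard = 2 := hdeg ⟨b, hab⟩
  obtain ⟨y, hy, hyne, hall⟩ := pair_or h2 (show s ∈ K.neighborSet a from has)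
  have hty : t = y := (hall t hat).resolve_left (fun h => hst h.symm)
  have hrot := c.rotate_edges a ha
  rcases hall b hab with rfl | rfl
  · exact hrot.mem_iff.mp hes
  · rw [hty] at het
    exact hrot.mem_iff.mp het

lemma exists_spanning_path_of_cycle {K : SimpleGraph V}
    {v : V} {c : K.Walk v v} (hc : c.IsCycle)
    {a b : V} (hab : K.Adj a b) (hedge : s(a, b) ∈ c.edges) :
    ∃ p : K.Walk a b, p.IsPath ∧ (∀ y, y ∈ p.support ↔ y ∈ c.support) := by
  have ha : a ∈ c.support := c.fst_mem_support_of_mem_edges hedge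
  have hnil := hc.isCircuit.not_nil
  have hc' : (c.rotate a ha).IsCycle := hc.rotate ha
  have hedge' : s(a, b) ∈ (c.rotate a ha).edges := (c.rotate_edges a ha).mem_iff.mpr hedge
  have hmemiff : ∀ y, y ∈ (c.rotate a ha).support ↔ y ∈ c.support :=
    fun y => mem_support_rotate hnil ha
  obtain ⟨s, h, q, hq⟩ := Walk.not_nil_iff.mp hc'.isCircuit.not_nil
  rw [hq] at hc' hedge'
  have hcyc := (Walk.cons_isCycle_iff q h).mp hc'
  have hsupiff : ∀ y, y ∈ (Walk.cons h q).support ↔ y ∈ c.support := by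
    intro y; rw [← hmemiff y, hq]
  by_cases hbs : b = s
  · subst hbs
    refine ⟨q.reverse, hcyc.1.reverse, ?_⟩
    intro y
    rw [← hsupiff y]
    simp only [Walk.support_reverse, List.mem_reverse, Walk.support_cons, List.mem_cons]
    constructor
    · exact Or.inr
    · rintro (rfl | hy)
      · exact q.end_mem_support
      · exact hy
  · have hbq : s(a, b) ∈ q.edges := by
      rw [Walk.edges_cons, List.mem_cons] at hedge'
      rcases hedge' with heq | hm
      · rw [Sym2.eq_iff] at heq
        rcases heq with ⟨-, h2'⟩ | ⟨h1', -⟩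
        · exact absurd h2' hbs
        · exact absurd h1' h.ne
      · exact hm
    have hqnil : ¬ q.Nil := Walk.not_nil_of_ne h.ne'
    obtain ⟨m, hm, q2, hq2⟩ := Walk.not_nil_iff.mp hqnil
    obtain ⟨t, r, h3, hcat⟩ := Walk.exists_cons_eq_concat hm q2
    have hqr : q = r.concat h3 := hq2.trans hcat
    have hqsup : q.support = r.support ++ [a] := by
      rw [hqr, Walk.support_concat]
    have hqnodup := hcyc.1.support_nodup
    rw [hqsup] at hqnodup
    have hanr : a ∉ r.support := by
      intro hin
      rcases List.disjoint_of_nodup_append hqnodup hin (List.mem_singleton_self a) 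
    have hrpath : r.IsPath := by
      rw [Walk.isPath_def]
      exact hqnodup.of_append_left
    have hbt : b = t := by
      rw [hqr, Walk.edges_concat, List.concat_eq_append, List.mem_append] at hbq
      rcases hbq with hm' | hm'
      · exact absurd (r.fst_mem_support_of_mem_edges hm') hanr
      · rw [List.mem_singleton, Sym2.eq_iff] at hm'
        rcases hm' with ⟨h1', -⟩ | ⟨-, h2'⟩
        · exact absurd h1'.symm h3.ne
        · exact h2'
    subst hbt
    refine ⟨Walk.cons h r, ?_, ?_⟩
    · rw [Walk.cons_isPath_iff]
      exact ⟨hrpath, hanr⟩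
    · intro y
      rw [← hsupiff y]
      simp only [Walk.support_cons, List.mem_cons, hqsup, List.mem_append,
        List.mem_singleton]
      tauto

/-- Main structural lemma for one side: a spanning path between two adjacent vertices. -/
lemma side_path {K : SimpleGraph V} {S : Set V}
    (hdeg : ∀ v ∈ S, (K.neighborSet v).ncard = 2)
    (hsub : ∀ ⦃x y : V⦄, K.Adj x y → x ∈ S)
    (hconn : ∀ x y, x ∈ S → y ∈ S → K.Reachable x y)
    {a b : V} (hab : K.Adj a b) :
    ∃ p : K.Walk a b, p.IsPath ∧ (∀ y, y ∈ p.support ↔ y ∈ S) := by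
  have hdeg' : ∀ ⦃x : V⦄, (K.neighborSet x).Nonempty → (K.neighborSet x).ncard = 2 := by
    rintro x ⟨w, hw⟩
    exact hdeg x (hsub hw)
  obtain ⟨v, c, hc⟩ := exists_cycle hdeg' hab
  have hsupeq := cycle_support_eq hdeg' hsub hconn hc
  have haS : a ∈ S := hsub hab
  have hedge := edge_mem_cycle hdeg' hc ((hsupeq a).mpr haS) hab
  obtain ⟨p, hp, hps⟩ := exists_spanning_path_of_cycle hc hab hedge
  exact ⟨p, hp, fun y => (hps y).trans (hsupeq y)⟩

end CPGaux

/-- A cubic graph: every vertex has exactly 3 neighbours. -/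
def IsCubic {V : Type*} (G : SimpleGraph V) : Prop :=
  ∀ v, (G.neighborSet v).ncard = 3

/-- The set `S` carries a chordless (induced) cycle of `G`. -/
def IsChordlessCycleOn {V : Type*} (G : SimpleGraph V) (S : Set V) : Prop :=
  (G.induce S).Connected ∧ ∀ v ∈ S, (G.neighborSet v ∩ S).ncard = 2

/-- A cycle permutation graph: a cubic graph with a 2-factor consisting of two chordless
cycles. -/
def IsCyclePermutationGraph {V : Type*} (G : SimpleGraph V) : Prop :=
  IsCubic G ∧ ∃ S : Set V, IsChordlessCycleOn G S ∧ IsChordlessCycleOn G Sᶜ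

namespace CPGaux

variable {V : Type*} [Fintype V] [DecidableEq V]

/-- The spanning subgraph keeping only the edges inside `S`. -/
def sideGraph (G : SimpleGraph V) (S : Set V) : SimpleGraph V where
  Adj x y := G.Adj x y ∧ x ∈ S ∧ y ∈ S
  symm := ⟨fun x y ⟨h, hx, hy⟩ => ⟨h.symm, hy, hx⟩⟩
  loopless := ⟨fun x ⟨h, _⟩ => G.loopless.irrefl x h⟩

lemma sideGraph_le (G : SimpleGraph V) (S : Set V) : sideGraph G S ≤ G := fun _ _ h => h.1

lemma sideGraph_nbhd {G : SimpleGraph V} {S : Set V} {v : V} (hv : v ∈ S) :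
    (sideGraph G S).neighborSet v = G.neighborSet v ∩ S := by
  ext w
  simp only [mem_neighborSet, Set.mem_inter_iff, sideGraph]
  tauto

lemma sideGraph_conn {G : SimpleGraph V} {S : Set V} (h : (G.induce S).Connected) :
    ∀ x y, x ∈ S → y ∈ S → (sideGraph G S).Reachable x y := by
  intro x y hx hy
  have hr := h.preconnected ⟨x, hx⟩ ⟨y, hy⟩
  let f : G.induce S →g sideGraph G S :=
    { toFun := Subtype.val,
      map_rel' := by rintro ⟨p, hp⟩ ⟨q, hq⟩ hpq; exact ⟨hpq, hp, hq⟩ }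
  exact hr.map f

lemma side_spanning_path {G : SimpleGraph V} {S : Set V} (hS : IsChordlessCycleOn G S)
    {a b : V} (ha : a ∈ S) (hb : b ∈ S) (hab : G.Adj a b) :
    ∃ p : (sideGraph G S).Walk a b, p.IsPath ∧ (∀ y, y ∈ p.support ↔ y ∈ S) := by
  apply side_path (S := S)
  · intro v hv
    rw [sideGraph_nbhd hv]
    exact hS.2 v hv
  · intro x y hxy
    exact hxy.2.1
  · exact sideGraph_conn hS.1
  · exact ⟨hab, ha, hb⟩

/-- Assemble the hamiltonian cycle from the crossing configuration. -/
lemma assemble {G : SimpleGraph V} {S : Set V}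
    (hS : IsChordlessCycleOn G S) (hC : IsChordlessCycleOn G Sᶜ)
    {a b c d : V} (ha : a ∈ S) (hb : b ∈ S) (hc : c ∈ Sᶜ) (hd : d ∈ Sᶜ)
    (hab : G.Adj a b) (hcd : G.Adj c d) (hac : G.Adj a c) (hbd : G.Adj b d) :
    ∃ (v : V) (w : G.Walk v v), w.IsHamiltonianCycle := by
  obtain ⟨pS, hpS, hL1⟩ := side_spanning_path hS ha hb hab
  obtain ⟨pC, hpC, hL2⟩ := side_spanning_path hC hc hd hcd
  set P1 : G.Walk a b := pS.mapLe (sideGraph_le G S) with hP1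
  set P2 : G.Walk c d := pC.mapLe (sideGraph_le G Sᶜ) with hP2
  have hmap_sup : ∀ {K : SimpleGraph V} (hle : K ≤ G) {u v : V} (p : K.Walk u v),
      (p.mapLe hle).support = p.support := by
    intro K hle u v p
    rw [Walk.mapLe, Walk.support_map,
      show ⇑(Hom.ofLE hle) = id from rfl, List.map_id]
  have hmap_edg : ∀ {K : SimpleGraph V} (hle : K ≤ G) {u v : V} (p : K.Walk u v),
      (p.mapLe hle).edges = p.edges := by
    intro K hle u v p
    rw [Walk.mapLe, Walk.edges_map,
      show ⇑(Hom.ofLE hle) = id from rfl, Sym2.map_id, List.map_id]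
  have hP1sup : P1.support = pS.support := hmap_sup _ pS
  have hP2sup : P2.support = pC.support := hmap_sup _ pC
  have hE1 : ∀ x y, s(x, y) ∈ P1.edges → x ∈ S ∧ y ∈ S := by
    intro x y hxy
    rw [hP1, hmap_edg] at hxy
    have := pS.adj_of_mem_edges hxy
    exact ⟨this.2.1, this.2.2⟩
  have hE2 : ∀ x y, s(x, y) ∈ P2.edges → x ∈ Sᶜ ∧ y ∈ Sᶜ := by
    intro x y hxy
    rw [hP2, hmap_edg] at hxy
    have := pC.adj_of_mem_edges hxy
    exact ⟨this.2.1, this.2.2⟩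
  have hP1path : P1.IsPath := hpS.mapLe _
  have hP2path : P2.IsPath := hpC.mapLe _
  set w : G.Walk a a :=
    P1.append (Walk.cons hbd (P2.reverse.append (Walk.cons hac.symm Walk.nil))) with hw
  have hwsup : w.support = P1.support ++ (P2.reverse.support ++ [a]) := by
    rw [hw]
    rw [Walk.support_append, Walk.support_cons, Walk.support_append]
    simp
  have hwtail : w.support.tail = P1.support.tail ++ (P2.reverse.support ++ [a]) := by
    rw [hwsup, List.tail_append_of_ne_nil (Walk.support_ne_nil _)]
  have hwedges : w.edges = P1.edges ++ (s(b, d) :: (P2.reverse.edges ++ [s(c, a)])) := by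
    rw [hw]
    rw [Walk.edges_append, Walk.edges_cons, Walk.edges_append]
    simp
  have hbdne : s(b, d) ≠ s(c, a) := by
    intro heq
    rw [Sym2.eq_iff] at heq
    rcases heq with ⟨rfl, -⟩ | ⟨rfl, -⟩
    · exact hc hb
    · exact hab.ne rfl
  have hbdE1 : s(b, d) ∉ P1.edges := fun hmem => hd (hE1 b d hmem).2
  have hcaE1 : s(c, a) ∉ P1.edges := fun hmem => hc (hE1 c a hmem).1
  have hbdE2 : s(b, d) ∉ P2.edges := fun hmem => (hE2 b d hmem).1 hb
  have hcaE2 : s(c, a) ∉ P2.edges := fun hmem => (hE2 c a hmem).2 ha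
  have hdisj12 : ∀ e, e ∈ P1.edges → e ∈ P2.edges → False := by
    intro e
    induction e using Sym2.ind with
    | _ x y =>
      intro h1 h2
      exact (hE2 x y h2).1 (hE1 x y h1).1
  have hL1S : ∀ z ∈ P1.support, z ∈ S := by
    intro z hz
    rw [hP1sup] at hz
    exact (hL1 z).mp hz
  have hL2C : ∀ z ∈ P2.support, z ∈ Sᶜ := by
    intro z hz
    rw [hP2sup] at hz
    exact (hL2 z).mp hz
  have hcyc : w.IsCycle := by
    refine ⟨⟨⟨?_⟩, ?_⟩, ?_⟩
    · -- edges nodup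
      rw [hwedges, List.nodup_append]
      refine ⟨hP1path.isTrail.edges_nodup, ?_, ?_⟩
      · rw [List.nodup_cons]
        constructor
        · rw [List.mem_append, Walk.edges_reverse, List.mem_reverse, List.mem_singleton]
          rintro (hmem | heq)
          · exact hbdE2 hmem
          · exact hbdne heq
        · rw [List.nodup_append]
          refine ⟨?_, List.nodup_singleton _, ?_⟩
          · rw [Walk.edges_reverse]
            exact List.nodup_reverse.mpr hP2path.isTrail.edges_nodup
          · intro e he _ hb
            rw [List.mem_singleton] at hb
            subst hb
            rintro rfl
            rw [Walk.edges_reverse, List.mem_reverse] at he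
            exact hcaE2 he
      · intro e he1 f he2 rfl
        rw [List.mem_cons, List.mem_append, Walk.edges_reverse, List.mem_reverse,
          List.mem_singleton] at he2
        rcases he2 with rfl | hmem | rfl
        · exact hbdE1 he1
        · exact hdisj12 e he1 hmem
        · exact hcaE1 he1
    · -- ne nil
      intro hn
      have hbmem : b ∈ w.support := by
        rw [hwsup, List.mem_append]
        exact Or.inl (hP1sup ▸ pS.end_mem_support)
      rw [hn, Walk.support_nil, List.mem_singleton] at hbmem
      exact hab.ne' hbmem
    · -- support tail nodup
      rw [hwtail, List.nodup_append]
      have hP1nodup : P1.support.Nodup := hP1path.support_nodup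
      have haT : a ∉ P1.support.tail := by
        have := hP1nodup
        rw [P1.support_eq_cons, List.nodup_cons] at this
        exact this.1
      refine ⟨hP1nodup.tail, ?_, ?_⟩
      · rw [List.nodup_append]
        refine ⟨?_, List.nodup_singleton _, ?_⟩
        · rw [Walk.support_reverse]
          exact List.nodup_reverse.mpr hP2path.support_nodup
        · intro z hz _ hb
          rw [List.mem_singleton] at hb
          subst hb
          rintro rfl
          rw [Walk.support_reverse, List.mem_reverse] at hz
          exact hL2C z hz ha
      · intro z hz1 y hz2 rfl
        have hzS : z ∈ S := hL1S z (List.mem_of_mem_tail hz1)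
        rw [List.mem_append, Walk.support_reverse, List.mem_reverse,
          List.mem_singleton] at hz2
        rcases hz2 with hmem | rfl
        · exact hL2C z hmem hzS
        · exact haT hz1
  refine ⟨a, w, ?_⟩
  rw [Walk.isHamiltonianCycle_iff_isCycle_and_support_count_tail_eq_one]
  refine ⟨hcyc, ?_⟩
  intro z
  apply List.count_eq_one_of_mem hcyc.support_nodup
  rw [hwtail, List.mem_append, List.mem_append, Walk.support_reverse, List.mem_reverse,
    List.mem_singleton]
  by_cases hzS : z ∈ S
  · have hz1 : z ∈ P1.support := by
      rw [hP1sup]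
      exact (hL1 z).mpr hzS
    rw [P1.support_eq_cons, List.mem_cons] at hz1
    rcases hz1 with rfl | hz1
    · exact Or.inr (Or.inr rfl)
    · exact Or.inl hz1
  · have hz2 : z ∈ P2.support := by
      rw [hP2sup]
      exact (hL2 z).mpr hzS
    exact Or.inr (Or.inl hz2)

/-- Cross degrees are 1. -/
lemma cross_deg {G : SimpleGraph V} (hcub : IsCubic G) {S : Set V}
    (hS2 : ∀ v ∈ S, (G.neighborSet v ∩ S).ncard = 2) :
    ∀ v ∈ S, (G.neighborSet v ∩ Sᶜ).ncard = 1 := by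
  intro v hv
  have hsplit : (G.neighborSet v ∩ S) ∪ (G.neighborSet v ∩ Sᶜ) = G.neighborSet v := by
    rw [← Set.inter_union_distrib_left, Set.union_compl_self, Set.inter_univ]
  have hdisj : Disjoint (G.neighborSet v ∩ S) (G.neighborSet v ∩ Sᶜ) :=
    Set.disjoint_of_subset Set.inter_subset_right Set.inter_subset_right
      disjoint_compl_right
  have := Set.ncard_union_eq hdisj (Set.toFinite _) (Set.toFinite _)
  rw [hsplit, hcub v, hS2 v hv] at this
  omega

/-- If a vertex of `S` has two distinct neighbours outside `S`, contradiction. -/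
lemma lone {G : SimpleGraph V} {S : Set V}
    (hcross : ∀ v ∈ S, (G.neighborSet v ∩ Sᶜ).ncard = 1)
    {u w1 w2 : V} (hu : u ∈ S) (h1 : w1 ∉ S) (h2 : w2 ∉ S) (hne : w1 ≠ w2)
    (a1 : G.Adj u w1) (a2 : G.Adj u w2) : False := by
  have hsub : ({w1, w2} : Set V) ⊆ G.neighborSet u ∩ Sᶜ := by
    rintro z (rfl | rfl)
    · exact ⟨a1, h1⟩
    · exact ⟨a2, h2⟩
  have := Set.ncard_le_ncard hsub (Set.toFinite _)
  rw [Set.ncard_pair hne, hcross u hu] at this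
  omega

/-- The all-in-one-side case: a crossing configuration still exists. -/
lemma allin {G : SimpleGraph V} {S : Set V}
    (hS : IsChordlessCycleOn G S)
    (hCdeg : ∀ v ∈ Sᶜ, (G.neighborSet v ∩ Sᶜ).ncard = 2)
    (hcross1 : ∀ v ∈ S, (G.neighborSet v ∩ Sᶜ).ncard = 1)
    (hcross2 : ∀ v ∈ Sᶜ, (G.neighborSet v ∩ S).ncard = 1)
    {x0 x1 x2 x3 : V} (m0 : x0 ∈ S) (m1 : x1 ∈ S) (m2 : x2 ∈ S) (m3 : x3 ∈ S)
    (h01 : G.Adj x0 x1) (h12 : G.Adj x1 x2) (h23 : G.Adj x2 x3) (h30 : G.Adj x3 x0)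
    (d02 : x0 ≠ x2) (d13 : x1 ≠ x3) :
    ∃ a b c d, a ∈ S ∧ b ∈ S ∧ c ∈ Sᶜ ∧ d ∈ Sᶜ ∧
      G.Adj a b ∧ G.Adj c d ∧ G.Adj a c ∧ G.Adj b d := by
  classical
  have d01 : x0 ≠ x1 := h01.ne
  have d12 : x1 ≠ x2 := h12.ne
  have d23 : x2 ≠ x3 := h23.ne
  have d30 : x3 ≠ x0 := h30.ne
  set K := sideGraph G S with hK
  have k01 : K.Adj x0 x1 := ⟨h01, m0, m1⟩
  have k12 : K.Adj x1 x2 := ⟨h12, m1, m2⟩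
  have k23 : K.Adj x2 x3 := ⟨h23, m2, m3⟩
  have k30 : K.Adj x3 x0 := ⟨h30, m3, m0⟩
  set cyc : K.Walk x0 x0 :=
    Walk.cons k01 (Walk.cons k12 (Walk.cons k23 (Walk.cons k30 Walk.nil))) with hcyc
  have hcycle : cyc.IsCycle := by
    rw [hcyc, Walk.cons_isCycle_iff]
    constructor
    · rw [Walk.isPath_def]
      simp only [Walk.support_cons, Walk.support_nil, List.nodup_cons, List.mem_cons,
        List.mem_singleton, List.not_mem_nil, List.nodup_nil, not_or, or_false, and_true]
      exact ⟨⟨d12, d13, fun h => d01 h.symm⟩, ⟨d23, fun h => d02 h.symm⟩, d30, not_false⟩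
    · simp only [Walk.edges_cons, Walk.edges_nil, List.mem_cons, List.not_mem_nil, or_false]
      rintro (heq | heq | heq) <;> rw [Sym2.eq_iff] at heq
      · rcases heq with ⟨h1', -⟩ | ⟨h1', -⟩
        · exact d01 h1'
        · exact d02 h1'
      · rcases heq with ⟨h1', -⟩ | ⟨h1', -⟩
        · exact d02 h1'
        · exact d30 h1'.symm
      · rcases heq with ⟨h1', -⟩ | ⟨-, h2'⟩
        · exact d30 h1'.symm
        · exact d13 h2'
  have hdeg' : ∀ ⦃x : V⦄, ((K.neighborSet x)).Nonempty → (K.neighborSet x).ncard = 2 := by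
    rintro x ⟨z, hz⟩
    have hxS : x ∈ S := hz.2.1
    rw [hK, sideGraph_nbhd hxS]
    exact hS.2 x hxS
  have hsupeq := cycle_support_eq hdeg' (fun x y h => h.2.1) (sideGraph_conn hS.1) hcycle
  have hcov : ∀ y ∈ S, y = x0 ∨ y = x1 ∨ y = x2 ∨ y = x3 := by
    intro y hy
    have hmem := (hsupeq y).mpr hy
    rw [hcyc] at hmem
    simp only [Walk.support_cons, Walk.support_nil, List.mem_cons, List.mem_singleton,
      List.not_mem_nil, or_false] at hmem
    tauto
  obtain ⟨y0, hy0⟩ := Set.ncard_eq_one.mp (hcross1 x0 m0)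
  obtain ⟨y1, hy1⟩ := Set.ncard_eq_one.mp (hcross1 x1 m1)
  obtain ⟨y2, hy2⟩ := Set.ncard_eq_one.mp (hcross1 x2 m2)
  obtain ⟨y3, hy3⟩ := Set.ncard_eq_one.mp (hcross1 x3 m3)
  have a0 : G.Adj x0 y0 ∧ y0 ∈ Sᶜ := by
    have : y0 ∈ G.neighborSet x0 ∩ Sᶜ := by rw [hy0]; exact Set.mem_singleton _
    exact this
  have a1 : G.Adj x1 y1 ∧ y1 ∈ Sᶜ := by
    have : y1 ∈ G.neighborSet x1 ∩ Sᶜ := by rw [hy1]; exact Set.mem_singleton _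
    exact this
  have a2 : G.Adj x2 y2 ∧ y2 ∈ Sᶜ := by
    have : y2 ∈ G.neighborSet x2 ∩ Sᶜ := by rw [hy2]; exact Set.mem_singleton _
    exact this
  have a3 : G.Adj x3 y3 ∧ y3 ∈ Sᶜ := by
    have : y3 ∈ G.neighborSet x3 ∩ Sᶜ := by rw [hy3]; exact Set.mem_singleton _
    exact this
  have hscov : ∀ w ∈ Sᶜ, w = y0 ∨ w = y1 ∨ w = y2 ∨ w = y3 := by
    intro w hw
    obtain ⟨z, hz⟩ := Set.ncard_eq_one.mp (hcross2 w hw)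
    have hzmem : z ∈ G.neighborSet w ∩ S := by rw [hz]; exact Set.mem_singleton _
    rcases hcov z hzmem.2 with rfl | rfl | rfl | rfl
    · have : w ∈ G.neighborSet z ∩ Sᶜ := ⟨hzmem.1.symm, hw⟩
      rw [hy0] at this
      exact Or.inl this
    · have : w ∈ G.neighborSet z ∩ Sᶜ := ⟨hzmem.1.symm, hw⟩
      rw [hy1] at this
      exact Or.inr (Or.inl this)
    · have : w ∈ G.neighborSet z ∩ Sᶜ := ⟨hzmem.1.symm, hw⟩
      rw [hy2] at this
      exact Or.inr (Or.inr (Or.inl this))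
    · have : w ∈ G.neighborSet z ∩ Sᶜ := ⟨hzmem.1.symm, hw⟩
      rw [hy3] at this
      exact Or.inr (Or.inr (Or.inr this))
  by_cases hA : G.Adj y0 y1
  · exact ⟨x0, x1, y0, y1, m0, m1, a0.2, a1.2, h01, hA, a0.1, a1.1⟩
  by_cases hB : G.Adj y1 y2
  · exact ⟨x1, x2, y1, y2, m1, m2, a1.2, a2.2, h12, hB, a1.1, a2.1⟩
  by_cases hC2 : G.Adj y2 y3
  · exact ⟨x2, x3, y2, y3, m2, m3, a2.2, a3.2, h23, hC2, a2.1, a3.1⟩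
  by_cases hD : G.Adj y3 y0
  · exact ⟨x3, x0, y3, y0, m3, m0, a3.2, a0.2, h30, hD, a3.1, a0.1⟩
  exfalso
  have h2 : (G.neighborSet y1 ∩ Sᶜ).ncard = 2 := hCdeg y1 a1.2
  have hsub13 : (G.neighborSet y1 ∩ Sᶜ) ⊆ {y3} := by
    rintro z ⟨hzadj, hzC⟩
    rcases hscov z hzC with rfl | rfl | rfl | rfl
    · exact absurd hzadj.symm hA
    · exact absurd hzadj (G.irrefl)
    · exact absurd hzadj hB
    · exact Set.mem_singleton _
  have hle := Set.ncard_le_ncard hsub13 (Set.toFinite _)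
  rw [h2, Set.ncard_singleton] at hle
  omega

end CPGaux

/-- A cycle permutation graph containing a cycle of length 4 is hamiltonian. -/
theorem statement_4 {V : Type*} [Fintype V] [DecidableEq V] (G : SimpleGraph V)
    (hG : IsCyclePermutationGraph G)
    (h4 : ∃ (v : V) (c : G.Walk v v), c.IsCycle ∧ c.length = 4) :
    G.IsHamiltonian := by
  classical
  obtain ⟨hcub, S, hS, hCc⟩ := hG
  have hc1 : ∀ u ∈ S, (G.neighborSet u ∩ Sᶜ).ncard = 1 := CPGaux.cross_deg hcub hS.2
  have hc2 : ∀ u ∈ Sᶜ, (G.neighborSet u ∩ S).ncard = 1 := by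
    intro u hu
    have := CPGaux.cross_deg hcub hCc.2 u hu
    rwa [compl_compl] at this
  have hS' : IsChordlessCycleOn G Sᶜᶜ := by rwa [compl_compl]
  have e1 : ∀ u ∈ Sᶜ, (G.neighborSet u ∩ Sᶜᶜ).ncard = 1 := by
    intro u hu
    rw [compl_compl]
    exact hc2 u hu
  have e2 : ∀ u ∈ Sᶜᶜ, (G.neighborSet u ∩ Sᶜ).ncard = 1 := by
    intro u hu
    rw [compl_compl] at hu
    exact hc1 u hu
  have e3 : ∀ u ∈ Sᶜᶜ, (G.neighborSet u ∩ Sᶜᶜ).ncard = 2 := by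
    intro u hu
    rw [compl_compl] at hu
    rw [compl_compl]
    exact hS.2 u hu
  have fin1 : ∀ a b c d : V, a ∈ S → b ∈ S → c ∈ Sᶜ → d ∈ Sᶜ →
      G.Adj a b → G.Adj c d → G.Adj a c → G.Adj b d → G.IsHamiltonian := by
    intro a b c d ha hb hcm hdm hab hcd hac hbd _
    obtain ⟨vv, w, hw⟩ := CPGaux.assemble hS hCc ha hb hcm hdm hab hcd hac hbd
    exact ⟨vv, w, hw⟩
  have fin2 : ∀ a b c d : V, a ∈ Sᶜ → b ∈ Sᶜ → c ∈ Sᶜᶜ → d ∈ Sᶜᶜ →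
      G.Adj a b → G.Adj c d → G.Adj a c → G.Adj b d → G.IsHamiltonian := by
    intro a b c d ha hb hcm hdm hab hcd hac hbd _
    obtain ⟨vv, w, hw⟩ := CPGaux.assemble hCc hS' ha hb hcm hdm hab hcd hac hbd
    exact ⟨vv, w, hw⟩
  obtain ⟨v, c, hcyc, hlen⟩ := h4
  cases c with
  | nil => simp at hlen
  | @cons _ z1 _ h01 r1 =>
  cases r1 with
  | nil => simp at hlen
  | @cons _ z2 _ h12 r2 =>
  cases r2 with
  | nil => simp at hlen
  | @cons _ z3 _ h23 r3 =>
  cases r3 with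
  | nil => simp at hlen
  | @cons _ z4 _ h34 r4 =>
  cases r4 with
  | cons h45 r5 => simp [Walk.length_cons] at hlen
  | nil =>
  have hnd := hcyc.support_nodup
  simp only [Walk.support_cons, Walk.support_nil, List.tail_cons, List.nodup_cons,
    List.mem_cons, List.mem_singleton, List.not_mem_nil, not_or, or_false, and_true,
    List.nodup_nil] at hnd
  obtain ⟨⟨d12, d13, d10⟩, ⟨d23, d20⟩, d30, -⟩ := hnd
  have d02 : v ≠ z2 := fun h => d20 h.symm
  by_cases p0 : v ∈ S <;> by_cases p1 : z1 ∈ S <;> by_cases p2 : z2 ∈ S <;>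
    by_cases p3 : z3 ∈ S
  · obtain ⟨a, b, cc, dd, ha, hb, hcm, hdm, hab, hcd, hac, hbd⟩ :=
      CPGaux.allin hS hCc.2 hc1 hc2 p0 p1 p2 p3 h01 h12 h23 h34 d02 d13
    exact fin1 a b cc dd ha hb hcm hdm hab hcd hac hbd
  · exact (CPGaux.lone e1 p3 (fun hh => hh p2) (fun hh => hh p0) d20 h23.symm h34).elim
  · exact (CPGaux.lone e1 p2 (fun hh => hh p1) (fun hh => hh p3) d13 h12.symm h23).elim
  · exact fin1 v z1 z3 z2 p0 p1 p3 p2 h01 h23.symm h34.symm h12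
  · exact (CPGaux.lone e1 p1 (fun hh => hh p0) (fun hh => hh p2) d02 h01.symm h12).elim
  · exact (CPGaux.lone hc1 p0 p1 p3 d13 h01 h34.symm).elim
  · exact fin1 z3 v z2 z1 p3 p0 p2 p1 h34 h12.symm h23.symm h01
  · exact (CPGaux.lone hc1 p0 p1 p3 d13 h01 h34.symm).elim
  · exact (CPGaux.lone e1 p0 (fun hh => hh p1) (fun hh => hh p3) d13 h01 h34.symm).elim
  · exact fin1 z1 z2 v z3 p1 p2 p0 p3 h12 h34.symm h01.symm h23
  · exact (CPGaux.lone hc1 p1 p0 p2 d02 h01.symm h12).elim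
  · exact (CPGaux.lone hc1 p1 p0 p2 d02 h01.symm h12).elim
  · exact fin1 z2 z3 z1 v p2 p3 p1 p0 h23 h01.symm h12.symm h34
  · exact (CPGaux.lone hc1 p2 p1 p3 d13 h12.symm h23).elim
  · exact (CPGaux.lone hc1 p3 p2 p0 d20 h23.symm h34).elim
  · obtain ⟨a, b, cc, dd, ha, hb, hcm, hdm, hab, hcd, hac, hbd⟩ :=
      CPGaux.allin hCc e3 e1 e2 p0 p1 p2 p3 h01 h12 h23 h34 d02 d13
    exact fin2 a b cc dd ha hb hcm hdm hab hcd hac hbd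
end

section
/- The Petersen graph is not hamiltonian. -/
open SimpleGraph

/-- The Petersen graph, as the Kneser graph `K(5,2)`: vertices are the 2-element subsets of a
5-element set, adjacent iff disjoint. -/
def petersen : SimpleGraph {s : Finset (Fin 5) // s.card = 2} where
  Adj a b := Disjoint (a : Finset (Fin 5)) (b : Finset (Fin 5))
  symm := ⟨fun a b h => h.symm⟩
  loopless := by
    constructor
    intro a h
    have he : (a : Finset (Fin 5)) = ⊥ := disjoint_self.mp h
    have h2 := a.2
    rw [he] at h2
    simp at h2

namespace PetersenAux

abbrev V := {s : Finset (Fin 5) // s.card = 2}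

def adjB (v w : V) : Bool := decide (Disjoint v.1 w.1)

def verts : List V :=
  [⟨{0,1}, by decide⟩, ⟨{0,2}, by decide⟩, ⟨{0,3}, by decide⟩, ⟨{0,4}, by decide⟩,
   ⟨{1,2}, by decide⟩, ⟨{1,3}, by decide⟩, ⟨{1,4}, by decide⟩,
   ⟨{2,3}, by decide⟩, ⟨{2,4}, by decide⟩, ⟨{3,4}, by decide⟩]

lemma mem_verts : ∀ v : V, v ∈ verts := by decide

def ext (l : List V) : List (List V) :=
  match l with
  | [] => []
  | v :: _ => (verts.filter (fun w => adjB v w && !(l.contains w))).map (· :: l)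

def paths (n : ℕ) : List (List V) :=
  Nat.rec (verts.map (fun v => [v])) (fun _ ih => ih.flatMap ext) n

lemma paths_zero : paths 0 = verts.map (fun v => [v]) := rfl

lemma paths_succ (n : ℕ) : paths (n+1) = (paths n).flatMap ext := rfl

lemma adjB_symm (v w : V) : adjB v w = adjB w v := by
  simp [adjB, disjoint_comm]

lemma complete : ∀ (n : ℕ) (l : List V), l.Chain' (fun x y => adjB x y = true) →
    l.Nodup → l.length = n + 1 → l ∈ paths n := by
  intro n
  induction n with
  | zero =>
    intro l _ _ hlen
    match l, hlen with
    | [v], _ =>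
      rw [paths_zero, List.mem_map]
      exact ⟨v, mem_verts v, rfl⟩
  | succ n ih =>
    intro l hc hd hlen
    match l, hlen with
    | v :: w :: r, hlen =>
      have h1 : (w :: r) ∈ paths n := by
        refine ih _ hc.tail hd.of_cons ?_
        simpa using hlen
      rw [paths_succ, List.mem_flatMap]
      refine ⟨w :: r, h1, ?_⟩
      simp only [ext, List.mem_map]
      refine ⟨v, ?_, rfl⟩
      rw [List.mem_filter]
      constructor
      · exact mem_verts v
      · have hadj : adjB v w = true := (List.isChain_cons_cons.mp hc).1
        have hv : v ∉ w :: r := by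
          have := hd
          rw [List.nodup_cons] at this
          exact this.1
        rw [adjB_symm] at hadj
        simp [hadj, hv]

set_option maxRecDepth 40000 in
lemma check : (paths 9).all
    (fun l => match l with
      | [] => true
      | v :: r => !(adjB v ((v :: r).getLast (by simp)))) = true := by decide

end PetersenAux

/-- The Petersen graph is not hamiltonian. -/
theorem statement_14 : ¬ petersen.IsHamiltonian := by
  intro h
  have hcard : Fintype.card PetersenAux.V = 10 := by decide
  obtain ⟨a, p, hp⟩ := h (by rw [hcard]; omega)
  have hnil : ¬ p.Nil := hp.isCycle.not_nil
  set t : List PetersenAux.V := p.support.tail with ht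
  have hcount : ∀ v, t.count v = 1 := by
    intro v
    have := hp.isHamiltonian_tail v
    rw [SimpleGraph.Walk.support_tail_of_not_nil p hnil] at this; convert this using 2; exact lawful_beq_subsingleton _ _
  have hnodup : t.Nodup := List.nodup_iff_count_le_one.mpr fun v => le_of_eq (hcount v)
  have hmem : ∀ v : PetersenAux.V, v ∈ t := fun v =>
    List.count_pos_iff.mp (by rw [hcount v]; omega)
  have hlen : t.length = 10 := by
    have h1 : t.toFinset = Finset.univ := Finset.eq_univ_iff_forall.mpr
      (fun v => List.mem_toFinset.mpr (hmem v))
    have h2 := List.toFinset_card_of_nodup hnodup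
    rw [h1] at h2
    rw [← h2, Finset.card_univ, hcard]
  have hsupp : p.support = a :: t := p.support_eq_cons
  have hchain : p.support.Chain' petersen.Adj := p.isChain_adj_support
  have hlast : p.support.getLast (by simp) = a := p.getLast_support
  -- t is nonempty; write t = v :: r
  obtain ⟨v, r, hvr⟩ : ∃ v r, t = v :: r := by
    match t, hlen with
    | v :: r, _ => exact ⟨v, r, rfl⟩
  rw [hvr] at hsupp hnodup
  -- chain on support gives adj a v and chain' on t
  rw [hsupp, List.Chain', List.isChain_cons_cons] at hchain
  have hav : petersen.Adj a v := hchain.1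
  have hchainB : (v :: r).Chain' (fun x y => PetersenAux.adjB x y = true) :=
    hchain.2.imp (fun x y hxy => decide_eq_true (hxy : Disjoint x.1 y.1))
  have h1 : (v :: r).getLast? = some a := by
    have h2 : p.support.getLast? = some a := by
      rw [List.getLast?_eq_getLast (by simp), hlast]
    rwa [hsupp, List.getLast?_cons_cons] at h2
  have hlast2 : (v :: r).getLast (by simp) = a := by
    have h3 := List.getLast?_eq_getLast (l := v :: r) (by simp)
    rw [h3] at h1
    exact Option.some_inj.mp h1
  have hmem9 : (v :: r) ∈ PetersenAux.paths 9 := by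
    apply PetersenAux.complete 9 _ hchainB hnodup
    rw [← hvr]; omega
  have := List.all_eq_true.mp PetersenAux.check _ hmem9
  simp only [hlast2] at this
  have hB : PetersenAux.adjB v a = true := decide_eq_true (petersen.symm.symm _ _ hav : Disjoint v.1 a.1)
  rw [hB] at this
  simp at this
end

section
/- Let π be a permutation of Z_k with π(k-1) = k-1 and k ≥ 4. Then G(π) is non-hamiltonian if and only if the restricted permutation π̄ of Z_{k-1} (defined by π̄(i) = π(i) for i < k-1) is bad. -/
open SimpleGraph

/-- The cycle permutation graph `G(π)`: two cycles `x_0 … x_{k-1}` (the `inl` vertices) and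
`y_0 … y_{k-1}` (the `inr` vertices), with matching edges `x_i y_{π(i)}`. -/
def GPfull (k : ℕ) (π : Equiv.Perm (Fin k)) : SimpleGraph (Fin k ⊕ Fin k) :=
  SimpleGraph.fromRel (fun a b =>
    match a, b with
    | .inl i, .inl j => (j : ℕ) = (i : ℕ) + 1 ∨ ((i : ℕ) = k - 1 ∧ (j : ℕ) = 0)
    | .inr i, .inr j => (j : ℕ) = (i : ℕ) + 1 ∨ ((i : ℕ) = k - 1 ∧ (j : ℕ) = 0)
    | .inl i, .inr j => j = π i
    | _, _ => False)

/-- The graph `G'(π)`: as `G(π)` but with the edges `x_{k-1} x_0` and `y_{k-1} y_0` removed. -/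
def GP' (k : ℕ) (π : Equiv.Perm (Fin k)) : SimpleGraph (Fin k ⊕ Fin k) :=
  SimpleGraph.fromRel (fun a b =>
    match a, b with
    | .inl i, .inl j => (j : ℕ) = (i : ℕ) + 1
    | .inr i, .inr j => (j : ℕ) = (i : ℕ) + 1
    | .inl i, .inr j => j = π i
    | _, _ => False)

/-- `π` is good (Klee): `G'(π)` has a hamiltonian path with endpoints `x_i`, `y_j` for
`i, j ∈ {0, k-1}`, or a hamiltonian `E`-pair in which one path has endpoints `x_i`, `y_j`
(`i, j ∈ {0, k-1}`) and the other has endpoints `x_{k-1-i}`, `y_{k-1-j}`. -/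
def IsGood {k : ℕ} (π : Equiv.Perm (Fin k)) : Prop :=
  (∃ i j : Fin k, ((i : ℕ) = 0 ∨ (i : ℕ) = k - 1) ∧ ((j : ℕ) = 0 ∨ (j : ℕ) = k - 1) ∧
    ∃ p : (GP' k π).Walk (Sum.inl i) (Sum.inr j), p.IsPath ∧ ∀ w, w ∈ p.support) ∨
  (∃ i j : Fin k, ((i : ℕ) = 0 ∨ (i : ℕ) = k - 1) ∧ ((j : ℕ) = 0 ∨ (j : ℕ) = k - 1) ∧
    ∃ (p : (GP' k π).Walk (Sum.inl i) (Sum.inr j))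
      (q : (GP' k π).Walk (Sum.inl i.rev) (Sum.inr j.rev)),
      p.IsPath ∧ q.IsPath ∧ (∀ w, w ∈ p.support ∨ w ∈ q.support) ∧
      ∀ w, ¬(w ∈ p.support ∧ w ∈ q.support))

/-- `π` is bad if it is not good. -/
def IsBad {k : ℕ} (π : Equiv.Perm (Fin k)) : Prop := ¬ IsGood π

namespace KleeAux

open SimpleGraph Walk

variable {n : ℕ}

lemma count_zero' {V : Type*} [DecidableEq V] {l : List V} {a : V} (h : a ∉ l) :
    l.count a = 0 := List.count_eq_zero.mpr h

lemma count_pair_left {V : Type*} [DecidableEq V] {a b : V} (h : ¬ b = a) :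
    List.count a [a, b] = 1 := by simp [List.count_cons, h]

lemma count_pair_right {V : Type*} [DecidableEq V] {a b : V} (h : ¬ b = a) :
    List.count a [b, a] = 1 := by simp [List.count_cons, h]

lemma count_singleton' {V : Type*} [DecidableEq V] (a : V) : List.count a [a] = 1 := by simp

lemma count_pair_zero {V : Type*} [DecidableEq V] {a b c : V} (h1 : ¬ b = a) (h2 : ¬ c = a) :
    List.count a [b, c] = 0 := by simp [List.count_cons, h1, h2]

def emb : Fin n ⊕ Fin n → Fin (n+1) ⊕ Fin (n+1) := Sum.map Fin.castSucc Fin.castSucc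

lemma emb_inj : Function.Injective (emb (n := n)) :=
  Sum.map_injective.mpr ⟨Fin.castSucc_injective n, Fin.castSucc_injective n⟩

lemma emb_ne_v (z : Fin n ⊕ Fin n) : emb z ≠ Sum.inl (Fin.last n) := by
  rcases z with i | i <;> simp [emb]

lemma emb_ne_w (z : Fin n ⊕ Fin n) : emb z ≠ Sum.inr (Fin.last n) := by
  rcases z with i | i <;> simp [emb]

lemma emb_surj (z : Fin (n+1) ⊕ Fin (n+1)) (h1 : z ≠ Sum.inl (Fin.last n))
    (h2 : z ≠ Sum.inr (Fin.last n)) : ∃ z', emb z' = z := by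
  rcases z with m | m
  · obtain ⟨j, hj⟩ := Fin.exists_castSucc_eq.mpr (fun h : m = Fin.last n => h1 (by rw [h]))
    exact ⟨Sum.inl j, by simp [emb, hj]⟩
  · obtain ⟨j, hj⟩ := Fin.exists_castSucc_eq.mpr (fun h : m = Fin.last n => h2 (by rw [h]))
    exact ⟨Sum.inr j, by simp [emb, hj]⟩

variable (π : Equiv.Perm (Fin (n+1))) (σ : Equiv.Perm (Fin n))

lemma pi_castSucc (hσ : ∀ i : Fin n, (π i.castSucc : ℕ) = (σ i : ℕ)) (i : Fin n) :
    π i.castSucc = (σ i).castSucc := Fin.ext (by simp [hσ i])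

lemma adj_emb (hσ : ∀ i : Fin n, (π i.castSucc : ℕ) = (σ i : ℕ)) (a b : Fin n ⊕ Fin n) :
    (GPfull (n+1) π).Adj (emb a) (emb b) ↔ (GP' n σ).Adj a b := by
  rcases a with i | i <;> rcases b with j | j <;>
    simp only [GPfull, GP', emb, Sum.map_inl, Sum.map_inr, fromRel_adj, ne_eq,
      Sum.inl.injEq, Sum.inr.injEq, or_false, false_or, reduceCtorEq, not_false_iff, true_and,
      Fin.coe_castSucc, Fin.castSucc_inj, pi_castSucc π σ hσ]
  · have hi := i.isLt; have hj := j.isLt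
    constructor <;> rintro ⟨h1, h2⟩ <;> exact ⟨h1, by omega⟩
  · have hi := i.isLt; have hj := j.isLt
    constructor <;> rintro ⟨h1, h2⟩ <;> exact ⟨h1, by omega⟩

lemma adj_v_iff (hn : 3 ≤ n) (hlast : π (Fin.last n) = Fin.last n) (z : Fin (n+1) ⊕ Fin (n+1)) :
    (GPfull (n+1) π).Adj (Sum.inl (Fin.last n)) z ↔
      (z = Sum.inl (⟨0, by omega⟩ : Fin (n+1)) ∨ z = Sum.inl (⟨n-1, by omega⟩ : Fin (n+1)) ∨
       z = Sum.inr (Fin.last n)) := by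
  rcases z with m | m <;>
    simp only [GPfull, fromRel_adj, ne_eq, Sum.inl.injEq, Sum.inr.injEq, reduceCtorEq,
      or_false, false_or, false_and, and_false]
  · have hm := m.isLt
    simp only [Fin.ext_iff, Fin.val_last, ne_eq, ← Fin.val_ne_iff]
    omega
  · rw [hlast]
    constructor
    · rintro ⟨-, h⟩; exact h
    · rintro rfl; exact ⟨not_false, rfl⟩

lemma adj_w_iff (hn : 3 ≤ n) (hlast : π (Fin.last n) = Fin.last n) (z : Fin (n+1) ⊕ Fin (n+1)) :
    (GPfull (n+1) π).Adj (Sum.inr (Fin.last n)) z ↔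
      (z = Sum.inr (⟨0, by omega⟩ : Fin (n+1)) ∨ z = Sum.inr (⟨n-1, by omega⟩ : Fin (n+1)) ∨
       z = Sum.inl (Fin.last n)) := by
  rcases z with m | m <;>
    simp only [GPfull, fromRel_adj, ne_eq, Sum.inl.injEq, Sum.inr.injEq, reduceCtorEq,
      or_false, false_or, false_and, and_false]
  · constructor
    · rintro ⟨-, h⟩; exact π.injective (by rw [hlast, ← h])
    · rintro rfl; rw [hlast]; exact ⟨not_false, rfl⟩
  · have hm := m.isLt
    simp only [Fin.ext_iff, Fin.val_last, ne_eq, ← Fin.val_ne_iff]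
    omega


lemma lift_walk (hσ : ∀ i : Fin n, (π i.castSucc : ℕ) = (σ i : ℕ)) :
    ∀ {x y : Fin (n+1) ⊕ Fin (n+1)} (p : (GPfull (n+1) π).Walk x y) (a b : Fin n ⊕ Fin n),
      emb a = x → emb b = y →
      (∀ z ∈ p.support, z ≠ Sum.inl (Fin.last n) ∧ z ≠ Sum.inr (Fin.last n)) →
      ∃ q : (GP' n σ).Walk a b, q.support.map emb = p.support := by
  intro x y p
  induction p with
  | nil =>
    intro a b ha hb _
    have hab : a = b := emb_inj (ha.trans hb.symm)
    subst hab
    exact ⟨Walk.nil, by simp [ha]⟩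
  | @cons x x' y h p ih =>
    intro a b ha hb hall
    obtain ⟨a', ha'⟩ := emb_surj x' (hall x' (by simp)).1 (hall x' (by simp)).2
    have hadj : (GP' n σ).Adj a a' := (adj_emb π σ hσ a a').mp (by rw [ha, ha']; exact h)
    obtain ⟨q, hq⟩ := ih a' b ha' hb (fun z hz => hall z (by simp [hz]))
    exact ⟨Walk.cons hadj q, by simp [hq, ha]⟩

lemma trim_last {V : Type*} {G : SimpleGraph V} {a b : V} (P : G.Walk a b) (hP : ¬ P.Nil) :
    ∃ (d : V) (h : G.Adj d b) (Q : G.Walk a d), P = Q.concat h := by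
  obtain ⟨u, h, p, rfl⟩ := Walk.not_nil_iff.mp hP
  obtain ⟨x, q, h', hq⟩ := Walk.exists_cons_eq_concat h p
  exact ⟨x, h', q, hq⟩

lemma hamCycle_rotate {V : Type*} [DecidableEq V] {G : SimpleGraph V} {a b : V}
    {c : G.Walk a a} (hc : c.IsHamiltonianCycle) (hb : b ∈ c.support) :
    (c.rotate b hb).IsHamiltonianCycle := by
  have hcyc := hc.isCycle.rotate hb
  refine ⟨hcyc, fun z => ?_⟩
  have st : ∀ {u : V} (p : G.Walk u u), ¬ p.Nil → p.tail.support = p.support.tail :=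
    fun p hp => by rw [← Walk.cons_support_tail hp, List.tail_cons]
  rw [st _ hcyc.not_nil,
    ((Walk.support_rotate c b hb).perm).count_eq,
    ← st _ hc.isCycle.not_nil]
  exact hc.isHamiltonian_tail z

lemma hamCycle_of_support {V : Type*} [DecidableEq V] {G : SimpleGraph V} {v u : V}
    (h : G.Adj v u) (Q : G.Walk u v) (hQ : Q.IsPath) (hcov : ∀ z, z ∈ Q.support)
    (hedge : s(v, u) ∉ Q.edges) : (Walk.cons h Q).IsHamiltonianCycle := by
  rw [Walk.isHamiltonianCycle_iff_isCycle_and_support_count_tail_eq_one]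
  refine ⟨(Walk.cons_isCycle_iff Q h).mpr ⟨hQ, hedge⟩, fun z => ?_⟩
  rw [Walk.support_cons, List.tail_cons]
  exact List.count_eq_one_of_mem hQ.support_nodup (hcov z)


section Main

variable (hn : 3 ≤ n) (hlast : π (Fin.last n) = Fin.last n)
  (hσ : ∀ i : Fin n, (π i.castSucc : ℕ) = (σ i : ℕ))

include hn hlast

lemma hadj_vx (i : Fin n) (hi : (i:ℕ) = 0 ∨ (i:ℕ) = n - 1) :
    (GPfull (n+1) π).Adj (Sum.inl (Fin.last n)) (emb (Sum.inl i)) := by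
  rw [adj_v_iff π hn hlast]
  rcases hi with h | h
  · exact Or.inl (by simp [emb, Fin.ext_iff, h])
  · exact Or.inr (Or.inl (by simp [emb, Fin.ext_iff, h]))

lemma hadj_wy (j : Fin n) (hj : (j:ℕ) = 0 ∨ (j:ℕ) = n - 1) :
    (GPfull (n+1) π).Adj (Sum.inr (Fin.last n)) (emb (Sum.inr j)) := by
  rw [adj_w_iff π hn hlast]
  rcases hj with h | h
  · exact Or.inl (by simp [emb, Fin.ext_iff, h])
  · exact Or.inr (Or.inl (by simp [emb, Fin.ext_iff, h]))

lemma hadj_vw : (GPfull (n+1) π).Adj (Sum.inl (Fin.last n)) (Sum.inr (Fin.last n)) :=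
  ((adj_w_iff π hn hlast (Sum.inl (Fin.last n))).mpr (Or.inr (Or.inr rfl))).symm

include hσ

lemma good_to_ham (hg : IsGood σ) : (GPfull (n+1) π).IsHamiltonian := by
  intro _
  have hrev : ∀ i : Fin n, (i:ℕ) = 0 ∨ (i:ℕ) = n - 1 →
      ((i.rev : ℕ) = 0 ∨ (i.rev : ℕ) = n - 1) := by
    intro i hi
    have := i.isLt
    rw [Fin.val_rev]
    omega
  let hom : GP' n σ →g GPfull (n+1) π := ⟨emb, fun {a b} h => (adj_emb π σ hσ a b).mpr h⟩
  rcases hg with ⟨i, j, hi, hj, p, hp, hcov⟩ | ⟨i, j, hi, hj, p, q, hp, hq, hcov, hdisj⟩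
  · -- hamiltonian path case
    let p' := p.map hom
    have hps : p'.support = p.support.map emb := by
      simp only [p', Walk.support_map]; rfl
    have hjw : (GPfull (n+1) π).Adj (emb (Sum.inr j)) (Sum.inr (Fin.last n)) :=
      (hadj_wy π hn hlast j hj).symm
    have hvi : (GPfull (n+1) π).Adj (Sum.inl (Fin.last n)) (emb (Sum.inl i)) :=
      hadj_vx π hn hlast i hi
    let Q : (GPfull (n+1) π).Walk (emb (Sum.inl i)) (Sum.inl (Fin.last n)) :=
      p'.append (Walk.cons hjw (Walk.cons ((hadj_vw π hn hlast).symm) Walk.nil))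
    have hQs : Q.support = p.support.map emb ++ [Sum.inr (Fin.last n), Sum.inl (Fin.last n)] := by
      simp [Q, Walk.support_append, hps]
    have hnodup : Q.support.Nodup := by
      rw [hQs, List.nodup_append]
      refine ⟨hp.support_nodup.map emb_inj, by simp, ?_⟩
      intro a ha
      obtain ⟨z', _, rfl⟩ := List.mem_map.mp ha
      simp [emb_ne_v z', emb_ne_w z']
    refine ⟨Sum.inl (Fin.last n), Walk.cons hvi Q, ?_⟩
    refine hamCycle_of_support hvi Q (Walk.IsPath.mk' hnodup) ?_ ?_
    · intro z
      rw [hQs]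
      by_cases hzv : z = Sum.inl (Fin.last n)
      · subst hzv; simp
      · by_cases hzw : z = Sum.inr (Fin.last n)
        · subst hzw; simp
        · obtain ⟨z', rfl⟩ := emb_surj z hzv hzw
          exact List.mem_append_left _ (List.mem_map_of_mem (f := emb) (hcov z'))
    · intro hmem
      have hed : Q.edges = p'.edges ++
          [s(emb (Sum.inr j), Sum.inr (Fin.last n)),
           s(Sum.inr (Fin.last n), Sum.inl (Fin.last n))] := by
        simp only [Q, Walk.edges_append, Walk.edges_cons, Walk.edges_nil]
        exact List.append_cancel_left_eq _ _ _ |>.mpr rfl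
      rw [hed] at hmem
      simp only [List.mem_append, List.mem_cons, List.not_mem_nil, or_false] at hmem
      rcases hmem with hmem | hmem | hmem
      · have hvp := Walk.fst_mem_support_of_mem_edges p' hmem
        rw [hps] at hvp
        obtain ⟨z', _, hz'⟩ := List.mem_map.mp hvp
        exact emb_ne_v z' hz'
      · rw [Sym2.eq_iff] at hmem
        rcases hmem with ⟨h1, _⟩ | ⟨h1, _⟩
        · exact emb_ne_v _ h1.symm
        · simp at h1
      · rw [Sym2.eq_iff] at hmem
        rcases hmem with ⟨h1, _⟩ | ⟨_, h2⟩
        · simp at h1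
        · exact emb_ne_w _ h2
  · -- pair of paths case
    have hirev := hrev i hi
    have hjrev := hrev j hj
    let p' := p.map hom
    let q' := q.map hom
    have hps : p'.support = p.support.map emb := by
      simp only [p', Walk.support_map]; rfl
    have hqs : q'.support = q.support.map emb := by
      simp only [q', Walk.support_map]; rfl
    have hjw : (GPfull (n+1) π).Adj (emb (Sum.inr j)) (Sum.inr (Fin.last n)) :=
      (hadj_wy π hn hlast j hj).symm
    have hwj' : (GPfull (n+1) π).Adj (Sum.inr (Fin.last n)) (emb (Sum.inr j.rev)) :=
      hadj_wy π hn hlast j.rev hjrev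
    have hi'v : (GPfull (n+1) π).Adj (emb (Sum.inl i.rev)) (Sum.inl (Fin.last n)) :=
      (hadj_vx π hn hlast i.rev hirev).symm
    have hvi : (GPfull (n+1) π).Adj (Sum.inl (Fin.last n)) (emb (Sum.inl i)) :=
      hadj_vx π hn hlast i hi
    let Q : (GPfull (n+1) π).Walk (emb (Sum.inl i)) (Sum.inl (Fin.last n)) :=
      p'.append (Walk.cons hjw (Walk.cons hwj'
        (q'.reverse.append (Walk.cons hi'v Walk.nil))))
    have hQs : Q.support = p.support.map emb ++
        (Sum.inr (Fin.last n) :: ((q.support.map emb).reverse ++ [Sum.inl (Fin.last n)])) := by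
      simp [Q, Walk.support_append, Walk.support_reverse, hps, hqs]
    have hdisj' : ∀ z : Fin (n+1) ⊕ Fin (n+1),
        z ∈ p.support.map emb → z ∈ (q.support.map emb).reverse → False := by
      intro z hz1 hz2
      rw [List.mem_reverse] at hz2
      obtain ⟨z1, hz1m, rfl⟩ := List.mem_map.mp hz1
      obtain ⟨z2, hz2m, hz2e⟩ := List.mem_map.mp hz2
      exact hdisj z1 ⟨hz1m, (emb_inj hz2e) ▸ hz2m⟩
    have hnodup : Q.support.Nodup := by
      rw [hQs, List.nodup_append]
      refine ⟨hp.support_nodup.map emb_inj, ?_, ?_⟩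
      · rw [List.nodup_cons]
        constructor
        · intro hmem
          rw [List.mem_append] at hmem
          rcases hmem with hmem | hmem
          · rw [List.mem_reverse] at hmem
            obtain ⟨z', _, hz'⟩ := List.mem_map.mp hmem
            exact emb_ne_w z' hz'
          · simp at hmem
        · rw [List.nodup_append]
          refine ⟨List.nodup_reverse.mpr (hq.support_nodup.map emb_inj), List.nodup_singleton _, ?_⟩
          intro a ha
          rw [List.mem_reverse] at ha
          obtain ⟨z', _, rfl⟩ := List.mem_map.mp ha
          simp [emb_ne_v z']
      · intro a ha
        obtain ⟨z', _, rfl⟩ := List.mem_map.mp ha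
        intro _ hmem2 rfl
        simp only [List.mem_cons, List.mem_append, List.mem_singleton] at hmem2
        rcases hmem2 with h | h | h | h
        · exact emb_ne_w z' h
        · exact hdisj' _ ha h
        · exact emb_ne_v z' h
        · simp at h
    refine ⟨Sum.inl (Fin.last n), Walk.cons hvi Q, ?_⟩
    refine hamCycle_of_support hvi Q (Walk.IsPath.mk' hnodup) ?_ ?_
    · intro z
      rw [hQs]
      by_cases hzv : z = Sum.inl (Fin.last n)
      · subst hzv; simp
      · by_cases hzw : z = Sum.inr (Fin.last n)
        · subst hzw; simp
        · obtain ⟨z', rfl⟩ := emb_surj z hzv hzw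
          rcases hcov z' with hmem | hmem
          · exact List.mem_append_left _ (List.mem_map_of_mem (f := emb) hmem)
          · refine List.mem_append_right _ ?_
            simp only [List.mem_cons, List.mem_append, List.mem_reverse]
            exact Or.inr (Or.inl (List.mem_map_of_mem (f := emb) hmem))
    · intro hmem
      have hed : Q.edges = p'.edges ++
          (s(emb (Sum.inr j), Sum.inr (Fin.last n)) ::
           s(Sum.inr (Fin.last n), emb (Sum.inr j.rev)) ::
           (q'.reverse.edges ++ [s(emb (Sum.inl i.rev), Sum.inl (Fin.last n))])) := by
        simp only [Q, Walk.edges_append, Walk.edges_cons, Walk.edges_nil]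
        exact List.append_cancel_left_eq _ _ _ |>.mpr rfl
      rw [hed] at hmem
      simp only [List.mem_append, List.mem_cons, List.mem_singleton,
        List.not_mem_nil, or_false] at hmem
      rcases hmem with hmem | hmem | hmem | hmem | hmem
      · have hvp := Walk.fst_mem_support_of_mem_edges p' hmem
        rw [hps] at hvp
        obtain ⟨z', _, hz'⟩ := List.mem_map.mp hvp
        exact emb_ne_v z' hz'
      · rw [Sym2.eq_iff] at hmem
        rcases hmem with ⟨h1, _⟩ | ⟨h1, _⟩
        · exact emb_ne_v _ h1.symm
        · simp at h1
      · rw [Sym2.eq_iff] at hmem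
        rcases hmem with ⟨h1, _⟩ | ⟨h1, _⟩
        · simp at h1
        · exact emb_ne_v _ h1.symm
      · have hvp := Walk.fst_mem_support_of_mem_edges q'.reverse hmem
        rw [Walk.support_reverse, hqs, List.mem_reverse] at hvp
        obtain ⟨z', _, hz'⟩ := List.mem_map.mp hvp
        exact emb_ne_v z' hz'
      · rw [Sym2.eq_iff] at hmem
        rcases hmem with ⟨h1, _⟩ | ⟨_, h2⟩
        · exact emb_ne_v _ h1.symm
        · have h3 : i = i.rev := Sum.inl.inj (emb_inj h2)
          have h4 := congrArg Fin.val h3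
          rw [Fin.val_rev] at h4
          have := i.isLt
          rcases hi with h | h <;> omega

lemma caseA {x : Fin (n+1) ⊕ Fin (n+1)}
    (P : (GPfull (n+1) π).Walk x (Sum.inr (Fin.last n)))
    (hx : x = Sum.inl (⟨0, by omega⟩ : Fin (n+1)) ∨ x = Sum.inl (⟨n-1, by omega⟩ : Fin (n+1)))
    (hP : P.IsPath)
    (hmem : ∀ z, z ≠ Sum.inl (Fin.last n) → z ∈ P.support)
    (hnv : Sum.inl (Fin.last n) ∉ P.support) : IsGood σ := by
  have hPn : ¬ P.Nil := by
    intro h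
    rw [Walk.nil_iff_support_eq] at h
    have hw := P.end_mem_support
    rw [h, List.mem_singleton] at hw
    rcases hx with h' | h' <;> rw [h'] at hw <;> simp at hw
  obtain ⟨d, hdw, R, hPR⟩ := trim_last P hPn
  have hPs : P.support = R.support ++ [Sum.inr (Fin.last n)] := by
    rw [hPR, Walk.support_concat]
  have hnd := hP.support_nodup
  rw [hPs, List.nodup_append] at hnd
  have hRpath : R.IsPath := Walk.IsPath.mk' hnd.1
  have hwR : Sum.inr (Fin.last n) ∉ R.support :=
    fun hmem2 => hnd.2.2 _ hmem2 _ (List.mem_singleton_self _) rfl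
  have hdP : d ∈ P.support := by
    rw [hPs]; exact List.mem_append_left _ R.end_mem_support
  have hd : d = Sum.inr (⟨0, by omega⟩ : Fin (n+1)) ∨
      d = Sum.inr (⟨n-1, by omega⟩ : Fin (n+1)) := by
    rcases (adj_w_iff π hn hlast d).mp hdw.symm with h | h | h
    · exact Or.inl h
    · exact Or.inr h
    · exact absurd (h ▸ hdP) hnv
  have hmemR : ∀ z, z ≠ Sum.inl (Fin.last n) → z ≠ Sum.inr (Fin.last n) →
      z ∈ R.support := by
    intro z h1 h2
    have h3 := hmem z h1
    rw [hPs] at h3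
    rcases List.mem_append.mp h3 with h4 | h4
    · exact h4
    · exact absurd (List.mem_singleton.mp h4) h2
  obtain ⟨i, hi, hxi⟩ : ∃ i : Fin n, ((i:ℕ) = 0 ∨ (i:ℕ) = n - 1) ∧ emb (Sum.inl i) = x := by
    rcases hx with rfl | rfl
    · exact ⟨⟨0, by omega⟩, Or.inl rfl, by simp [emb, Fin.ext_iff]⟩
    · exact ⟨⟨n-1, by omega⟩, Or.inr rfl, by simp [emb, Fin.ext_iff]⟩
  obtain ⟨j, hj, hdj⟩ : ∃ j : Fin n, ((j:ℕ) = 0 ∨ (j:ℕ) = n - 1) ∧ emb (Sum.inr j) = d := by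
    rcases hd with rfl | rfl
    · exact ⟨⟨0, by omega⟩, Or.inl rfl, by simp [emb, Fin.ext_iff]⟩
    · exact ⟨⟨n-1, by omega⟩, Or.inr rfl, by simp [emb, Fin.ext_iff]⟩
  obtain ⟨q, hq⟩ := lift_walk π σ hσ R (Sum.inl i) (Sum.inr j) hxi hdj
    (fun z hz => ⟨fun h => hnv (h ▸ (hPs ▸ List.mem_append_left _ hz)),
                  fun h => hwR (h ▸ hz)⟩)
  refine Or.inl ⟨i, j, hi, hj, q, ?_, ?_⟩
  · exact Walk.IsPath.mk' (List.Nodup.of_map emb (hq ▸ hRpath.support_nodup))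
  · intro z'
    have hins : emb z' ∈ R.support := hmemR _ (emb_ne_v z') (emb_ne_w z')
    rw [← hq] at hins
    obtain ⟨u, hu, he⟩ := List.mem_map.mp hins
    exact (emb_inj he) ▸ hu

lemma caseB {x y : Fin (n+1) ⊕ Fin (n+1)}
    (P : (GPfull (n+1) π).Walk x y)
    (hxy : (x = Sum.inl (⟨0, by omega⟩ : Fin (n+1)) ∧ y = Sum.inl (⟨n-1, by omega⟩ : Fin (n+1))) ∨
           (x = Sum.inl (⟨n-1, by omega⟩ : Fin (n+1)) ∧ y = Sum.inl (⟨0, by omega⟩ : Fin (n+1))))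
    (hP : P.IsPath)
    (hmem : ∀ z, z ≠ Sum.inl (Fin.last n) → z ∈ P.support)
    (hnv : Sum.inl (Fin.last n) ∉ P.support) : IsGood σ := by
  classical
  have hwP : Sum.inr (Fin.last n) ∈ P.support := hmem _ (by simp)
  set r := P.takeUntil _ hwP with hr
  set s := P.dropUntil _ hwP with hs
  have hspec : r.append s = P := P.take_spec hwP
  have hrpath : r.IsPath := hP.takeUntil hwP
  have hspath : s.IsPath := hP.dropUntil hwP
  have hrn : ¬ r.Nil := by
    intro h
    rw [Walk.nil_iff_support_eq] at h
    have hw2 := r.end_mem_support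
    rw [h, List.mem_singleton] at hw2
    rcases hxy with ⟨h', -⟩ | ⟨h', -⟩ <;> rw [h'] at hw2 <;> simp at hw2
  obtain ⟨d1, hd1w, R, hrR⟩ := trim_last r hrn
  have hrs : r.support = R.support ++ [Sum.inr (Fin.last n)] := by
    rw [hrR, Walk.support_concat]
  have hsn : ¬ s.Nil := by
    intro h
    rw [Walk.nil_iff_support_eq] at h
    have hy2 := s.end_mem_support
    rw [h, List.mem_singleton] at hy2
    rcases hxy with ⟨-, h'⟩ | ⟨-, h'⟩ <;> rw [h'] at hy2 <;> simp at hy2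
  obtain ⟨d2, hwd2, S, hsS⟩ := Walk.not_nil_iff.mp hsn
  have hss : s.support = Sum.inr (Fin.last n) :: S.support := by
    rw [hsS, Walk.support_cons]
  have hPs : P.support = (R.support ++ [Sum.inr (Fin.last n)]) ++ S.support := by
    rw [← hspec, Walk.support_append, hrs, hss, List.tail_cons]
  have hnd := hP.support_nodup
  rw [hPs, List.nodup_append] at hnd
  obtain ⟨hndA, hndS, hdisjAS⟩ := hnd
  rw [List.nodup_append] at hndA
  obtain ⟨hndR, -, hdisjRw⟩ := hndA
  have hRpath : R.IsPath := Walk.IsPath.mk' hndR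
  have hSpath : S.IsPath := by
    have h2 : (Walk.cons hwd2 S).IsPath := hsS ▸ hspath
    exact h2.of_cons
  have hwR : Sum.inr (Fin.last n) ∉ R.support :=
    fun h => hdisjRw _ h _ (List.mem_singleton_self _) rfl
  have hwS : Sum.inr (Fin.last n) ∉ S.support :=
    fun h => hdisjAS _ (List.mem_append_right _ (List.mem_singleton_self _)) _ h rfl
  have hdisjRS : ∀ z, z ∈ R.support → z ∉ S.support :=
    fun z hz hzS => hdisjAS _ (List.mem_append_left _ hz) _ hzS rfl
  have hnvR : Sum.inl (Fin.last n) ∉ R.support :=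
    fun h => hnv (hPs ▸ List.mem_append_left _ (List.mem_append_left _ h))
  have hnvS : Sum.inl (Fin.last n) ∉ S.support :=
    fun h => hnv (hPs ▸ List.mem_append_right _ h)
  have hd1P : d1 ∈ R.support := R.end_mem_support
  have hd2S : d2 ∈ S.support := S.start_mem_support
  have hd1 : d1 = Sum.inr (⟨0, by omega⟩ : Fin (n+1)) ∨
      d1 = Sum.inr (⟨n-1, by omega⟩ : Fin (n+1)) := by
    rcases (adj_w_iff π hn hlast d1).mp hd1w.symm with h | h | h
    · exact Or.inl h
    · exact Or.inr h
    · exact absurd (h ▸ hd1P) hnvR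
  have hd2 : d2 = Sum.inr (⟨0, by omega⟩ : Fin (n+1)) ∨
      d2 = Sum.inr (⟨n-1, by omega⟩ : Fin (n+1)) := by
    rcases (adj_w_iff π hn hlast d2).mp hwd2 with h | h | h
    · exact Or.inl h
    · exact Or.inr h
    · exact absurd (h ▸ hd2S) hnvS
  have hne12 : d1 ≠ d2 := fun h => hdisjRS d1 hd1P (h ▸ hd2S)
  obtain ⟨i, hi, hxi, hyi⟩ : ∃ i : Fin n, ((i:ℕ) = 0 ∨ (i:ℕ) = n - 1) ∧
      emb (Sum.inl i) = x ∧ emb (Sum.inl i.rev) = y := by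
    rcases hxy with ⟨rfl, rfl⟩ | ⟨rfl, rfl⟩
    · exact ⟨⟨0, by omega⟩, Or.inl rfl, by simp [emb, Fin.ext_iff],
        by simp [emb, Fin.ext_iff, Fin.val_rev] <;> omega⟩
    · exact ⟨⟨n-1, by omega⟩, Or.inr rfl, by simp [emb, Fin.ext_iff],
        by simp [emb, Fin.ext_iff, Fin.val_rev] <;> omega⟩
  obtain ⟨j, hj, hdj, hdj2⟩ : ∃ j : Fin n, ((j:ℕ) = 0 ∨ (j:ℕ) = n - 1) ∧
      emb (Sum.inr j) = d1 ∧ emb (Sum.inr j.rev) = d2 := by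
    rcases hd1 with rfl | rfl <;> rcases hd2 with rfl | rfl
    · exact absurd rfl hne12
    · exact ⟨⟨0, by omega⟩, Or.inl rfl, by simp [emb, Fin.ext_iff],
        by simp [emb, Fin.ext_iff, Fin.val_rev] <;> omega⟩
    · exact ⟨⟨n-1, by omega⟩, Or.inr rfl, by simp [emb, Fin.ext_iff],
        by simp [emb, Fin.ext_iff, Fin.val_rev] <;> omega⟩
    · exact absurd rfl hne12
  have hSrev : S.reverse.support = S.support.reverse := Walk.support_reverse S
  obtain ⟨p1, hp1⟩ := lift_walk π σ hσ R (Sum.inl i) (Sum.inr j) hxi hdj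
    (fun z hz => ⟨fun h => hnvR (h ▸ hz), fun h => hwR (h ▸ hz)⟩)
  obtain ⟨q1, hq1⟩ := lift_walk π σ hσ S.reverse (Sum.inl i.rev) (Sum.inr j.rev) hyi hdj2
    (fun z hz => by
      rw [hSrev, List.mem_reverse] at hz
      exact ⟨fun h => hnvS (h ▸ hz), fun h => hwS (h ▸ hz)⟩)
  refine Or.inr ⟨i, j, hi, hj, p1, q1, ?_, ?_, ?_, ?_⟩
  · exact Walk.IsPath.mk' (List.Nodup.of_map emb (hp1 ▸ hRpath.support_nodup))
  · exact Walk.IsPath.mk' (List.Nodup.of_map emb (hq1 ▸ (hSpath.reverse).support_nodup))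
  · intro z'
    have hz' : emb z' ∈ P.support := hmem _ (emb_ne_v z')
    rw [hPs] at hz'
    rcases List.mem_append.mp hz' with h1 | h1
    · rcases List.mem_append.mp h1 with h2 | h2
      · left
        rw [← hp1] at h2
        obtain ⟨u, hu, he⟩ := List.mem_map.mp h2
        exact (emb_inj he) ▸ hu
      · exact absurd (List.mem_singleton.mp h2) (emb_ne_w z')
    · right
      have h2 : emb z' ∈ S.reverse.support := by
        rw [hSrev, List.mem_reverse]; exact h1
      rw [← hq1] at h2
      obtain ⟨u, hu, he⟩ := List.mem_map.mp h2
      exact (emb_inj he) ▸ hu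
  · rintro z' ⟨hz1, hz2⟩
    have h1 : emb z' ∈ R.support := hp1 ▸ List.mem_map_of_mem (f := emb) hz1
    have h2 : emb z' ∈ S.support := by
      have := hq1 ▸ List.mem_map_of_mem (f := emb) hz2
      rwa [hSrev, List.mem_reverse] at this
    exact hdisjRS _ h1 h2

lemma ham_to_good (hham : (GPfull (n+1) π).IsHamiltonian) : IsGood σ := by
  obtain ⟨a, c0, hc0⟩ := hham (by
    intro h
    rw [Fintype.card_sum, Fintype.card_fin] at h
    omega)
  have hv : Sum.inl (Fin.last n) ∈ c0.support := hc0.mem_support _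
  have hc : (c0.rotate _ hv).IsHamiltonianCycle := hamCycle_rotate hc0 hv
  set c := c0.rotate _ hv with hcdef
  have hcn : ¬ c.Nil := hc.isCycle.not_nil
  have ht : c.tail.IsHamiltonian := hc.isHamiltonian_tail
  have htp : c.tail.IsPath := ht.isPath
  have hs1adj : (GPfull (n+1) π).Adj (Sum.inl (Fin.last n)) (c.getVert 1) :=
    c.adj_snd hcn
  have htn : ¬ c.tail.Nil := by
    intro h
    rw [Walk.nil_iff_support_eq] at h
    have h2 := c.tail.end_mem_support
    rw [h, List.mem_singleton] at h2
    exact hs1adj.ne h2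
  obtain ⟨s0, hs0v, P, htP⟩ := trim_last c.tail htn
  have hts : c.tail.support = P.support ++ [Sum.inl (Fin.last n)] := by
    rw [htP, Walk.support_concat]
  have hnd := htp.support_nodup
  rw [hts, List.nodup_append] at hnd
  have hPpath : P.IsPath := Walk.IsPath.mk' hnd.1
  have hnv : Sum.inl (Fin.last n) ∉ P.support :=
    fun h => hnd.2.2 _ h _ (List.mem_singleton_self _) rfl
  have hmem : ∀ z, z ≠ Sum.inl (Fin.last n) → z ∈ P.support := by
    intro z hz
    have h2 := ht.mem_support z
    rw [hts] at h2
    rcases List.mem_append.mp h2 with h | h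
    · exact h
    · exact absurd (List.mem_singleton.mp h) hz
  have hs1 := (adj_v_iff π hn hlast _).mp hs1adj
  have hs0 := (adj_v_iff π hn hlast s0).mp hs0v.symm
  have hne : c.getVert 1 ≠ s0 := by
    intro h
    by_cases hPn : P.Nil
    · rw [Walk.nil_iff_support_eq] at hPn
      have h0 := hmem (Sum.inl (⟨0, by omega⟩ : Fin (n+1)))
        (by simp [Fin.ext_iff]; omega)
      have h1 := hmem (Sum.inl (⟨n-1, by omega⟩ : Fin (n+1)))
        (by simp [Fin.ext_iff]; omega)
      rw [hPn, List.mem_singleton] at h0 h1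
      rw [← h1] at h0
      simp [Fin.ext_iff] at h0
      omega
    · obtain ⟨u2, hadj2, Q2, hQ2⟩ := Walk.not_nil_iff.mp hPn
      have h3 := hPpath.support_nodup
      rw [hQ2, Walk.support_cons, List.nodup_cons] at h3
      apply h3.1
      rw [show c.snd = s0 from h]
      exact Q2.end_mem_support
  rcases hs1 with h1 | h1 | h1 <;> rcases hs0 with h0 | h0 | h0
  · exact absurd (h1.trans h0.symm) hne
  · exact caseB π σ hn hlast hσ P (Or.inl ⟨h1, h0⟩) hPpath hmem hnv
  · subst h0
    exact caseA π σ hn hlast hσ P (Or.inl h1) hPpath hmem hnv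
  · exact caseB π σ hn hlast hσ P (Or.inr ⟨h1, h0⟩) hPpath hmem hnv
  · exact absurd (h1.trans h0.symm) hne
  · subst h0
    exact caseA π σ hn hlast hσ P (Or.inr h1) hPpath hmem hnv
  · refine caseA π σ hn hlast hσ (P.reverse.copy rfl h1) (Or.inl h0) ?_ ?_ ?_
    · refine Walk.IsPath.mk' ?_
      rw [Walk.support_copy, Walk.support_reverse]
      exact List.nodup_reverse.mpr hPpath.support_nodup
    · intro z hz
      rw [Walk.support_copy, Walk.support_reverse, List.mem_reverse]
      exact hmem z hz
    · rw [Walk.support_copy, Walk.support_reverse, List.mem_reverse]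
      exact hnv
  · refine caseA π σ hn hlast hσ (P.reverse.copy rfl h1) (Or.inr h0) ?_ ?_ ?_
    · refine Walk.IsPath.mk' ?_
      rw [Walk.support_copy, Walk.support_reverse]
      exact List.nodup_reverse.mpr hPpath.support_nodup
    · intro z hz
      rw [Walk.support_copy, Walk.support_reverse, List.mem_reverse]
      exact hmem z hz
    · rw [Walk.support_copy, Walk.support_reverse, List.mem_reverse]
      exact hnv
  · exact absurd (h1.trans h0.symm) hne

theorem klee_main : (GPfull (n+1) π).IsHamiltonian ↔ IsGood σ :=
  ⟨ham_to_good π σ hn hlast hσ, good_to_ham π σ hn hlast hσ⟩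

end Main

end KleeAux

/-- Klee's Proposition 1: if `π` is a permutation of `Z_k` with `π(k-1) = k-1` and `k ≥ 4`,
then `G(π)` is non-hamiltonian iff the restriction `π̄` of `π` to `Z_{k-1}` is bad. -/
theorem statement_16 (k : ℕ) (hk : 4 ≤ k) (π : Equiv.Perm (Fin k))
    (hlast : π ⟨k - 1, by omega⟩ = ⟨k - 1, by omega⟩)
    (σ : Equiv.Perm (Fin (k - 1)))
    (hσ : ∀ i : Fin (k - 1),
      ((π ⟨(i : ℕ), i.isLt.trans_le (Nat.sub_le k 1)⟩ : Fin k) : ℕ) = ((σ i : Fin (k - 1)) : ℕ)) :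
    ¬ (GPfull k π).IsHamiltonian ↔ IsBad σ := by
  obtain ⟨n, rfl⟩ : ∃ n, k = n + 1 := ⟨k - 1, by omega⟩
  have hn : 3 ≤ n := by omega
  exact not_congr (KleeAux.klee_main π σ hn hlast (fun i => hσ i))
end
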